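/- Let q be a prime power, m ≥ 1, k ≥ 1, and Z_1, …, Z_k ⊆ {1, …, n}; set k̃ := max over nonempty Ω ⊆ {1, …, k} of (|∩_{i∈Ω} Z_i| + |Ω|) and assume k̃ ≤ n. Let G ∈ F_{q^m}^{k×n} have rank k and satisfy G_{ij} = 0 for all i ∈ {1, …, k} and j ∈ Z_i. Then for every ordered partition (n_1, …, n_ℓ) of n, the row space of G contains a nonzero codeword of sum-rank weight at most n − k̃ + 1; that is, the minimum sum-rank distance of the generated code is at most n − k̃ + 1. -/

import Mathlib

/-- The `F_q`-rank of a vector over `F_{q^m}`. -/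
noncomputable def rankFq (Fq : Type*) {K : Type*} [Field Fq] [Field K] [Algebra Fq K]
    {ι : Type*} (y : ι → K) : ℕ :=
  Module.finrank Fq (Submodule.span Fq (Set.range y))

/-- The sum-rank weight with respect to the ordered partition `(n_1, …, n_ℓ)`. -/
noncomputable def sumRankWt (Fq : Type*) {K : Type*} [Field Fq] [Field K] [Algebra Fq K]
    {ℓ : ℕ} {nn : Fin ℓ → ℕ} (x : ((l : Fin ℓ) × Fin (nn l)) → K) : ℕ :=
  ∑ l : Fin ℓ, rankFq Fq (fun t : Fin (nn l) => x ⟨l, t⟩)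

/-- `k̃ = max_{∅ ≠ Ω ⊆ [k]} (|∩_{i∈Ω} Z_i| + |Ω|)`. -/
def ktilde {k : ℕ} {ι : Type*} [Fintype ι] [DecidableEq ι]
    (Z : Fin k → Finset ι) : ℕ :=
  ((Finset.univ : Finset (Fin k)).powerset.filter Finset.Nonempty).sup
    (fun Ω => (Ω.inf Z).card + Ω.card)

open Classical in
lemma rankFq_le_card_support (Fq : Type*) {K : Type*} [Field Fq] [Field K] [Algebra Fq K]
    {ι : Type*} [Fintype ι] (y : ι → K) :
    rankFq Fq y ≤ (Finset.univ.filter (fun t => y t ≠ 0)).card := by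
  classical
  set s := Finset.univ.filter (fun t => y t ≠ 0) with hs
  have h1 : Set.range y ⊆ insert 0 ((s.image y : Finset K) : Set K) := by
    rintro _ ⟨t, rfl⟩
    by_cases h : y t = 0
    · simp [h]
    · exact Set.mem_insert_iff.mpr (Or.inr (by
        simp only [Finset.coe_image, Set.mem_image, Finset.mem_coe]
        exact ⟨t, by simp [hs, h], rfl⟩))
  have h2 : Submodule.span Fq (Set.range y) ≤
      Submodule.span Fq ((s.image y : Finset K) : Set K) := by
    have := Submodule.span_mono (R := Fq) h1
    rwa [Submodule.span_insert_zero] at this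
  haveI : Module.Finite Fq (Submodule.span Fq ((s.image y : Finset K) : Set K)) :=
    FiniteDimensional.span_of_finite Fq (Finset.finite_toSet _)
  calc rankFq Fq y ≤ Module.finrank Fq (Submodule.span Fq ((s.image y : Finset K) : Set K)) :=
        Submodule.finrank_mono h2
    _ ≤ (s.image y).card := finrank_span_finset_le_card _
    _ ≤ s.card := Finset.card_image_le

lemma e_injective {ℓ n : ℕ} (nn : Fin ℓ → ℕ) (e : ((l : Fin ℓ) × Fin (nn l)) → Fin n)
    (he : ∀ j : (l : Fin ℓ) × Fin (nn l),
      (e j : ℕ) = (∑ l ∈ Finset.univ.filter (fun l' => l' < j.1), nn l) + (j.2 : ℕ)) :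
    Function.Injective e := by
  classical
  have key : ∀ j1 j2 : (l : Fin ℓ) × Fin (nn l), j1.1 < j2.1 → (e j1 : ℕ) < (e j2 : ℕ) := by
    intro j1 j2 h
    rw [he, he]
    have hsub : insert j1.1 (Finset.univ.filter (fun l' => l' < j1.1)) ⊆
        Finset.univ.filter (fun l' => l' < j2.1) := by
      intro x hx
      simp only [Finset.mem_insert, Finset.mem_filter, Finset.mem_univ, true_and] at hx ⊢
      rcases hx with rfl | hx
      · exact h
      · exact hx.trans h
    have h1 : (∑ l ∈ Finset.univ.filter (fun l' => l' < j1.1), nn l) + nn j1.1 ≤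
        ∑ l ∈ Finset.univ.filter (fun l' => l' < j2.1), nn l := by
      rw [add_comm, ← Finset.sum_insert (by simp)]
      exact Finset.sum_le_sum_of_subset hsub
    have ht := j1.2.isLt
    omega
  intro j1 j2 hee
  rcases lt_trichotomy j1.1 j2.1 with h | h | h
  · exact absurd (congrArg Fin.val hee) (key j1 j2 h).ne
  · obtain ⟨l1, t1⟩ := j1; obtain ⟨l2, t2⟩ := j2
    simp only at h
    subst h
    have hval : (t1 : ℕ) = (t2 : ℕ) := by
      have h1 := he ⟨l1, t1⟩
      have h2 := he ⟨l1, t2⟩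
      rw [hee] at h1
      simp only at h1 h2
      omega
    simp [Fin.ext_iff, hval]
  · exact absurd (congrArg Fin.val hee) (key j2 j1 h).ne'

theorem sumRank_dist_le_of_support_constraints
    (q m n k : ℕ) (Fq K : Type*) [Field Fq] [Fintype Fq] (hq : Fintype.card Fq = q)
    [Field K] [Algebra Fq K] (hm : Module.finrank Fq K = m) (hm1 : 1 ≤ m) (hk : 1 ≤ k)
    (Z : Fin k → Finset (Fin n)) (hktilde : ktilde Z ≤ n)
    (G : Matrix (Fin k) (Fin n) K) (hG : G.rank = k)
    (hsupp : ∀ (i : Fin k) (j : Fin n), j ∈ Z i → G i j = 0)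
    (ℓ : ℕ) (hℓ : 1 ≤ ℓ) (nn : Fin ℓ → ℕ) (hnn : ∀ l, 1 ≤ nn l)
    (hsum : ∑ l, nn l = n)
    (e : ((l : Fin ℓ) × Fin (nn l)) → Fin n)
    (he : ∀ j : (l : Fin ℓ) × Fin (nn l),
      (e j : ℕ) = (∑ l ∈ Finset.univ.filter (fun l' => l' < j.1), nn l) + (j.2 : ℕ)) :
    ∃ c ∈ Submodule.span K (Set.range fun i : Fin k => G i),
      c ≠ 0 ∧ sumRankWt Fq (fun j => c (e j)) ≤ n - ktilde Z + 1 := by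
  classical
  -- rows are linearly independent
  have hrows : LinearIndependent K (fun i : Fin k => G i) := by
    rw [linearIndependent_iff_card_eq_finrank_span, Fintype.card_fin]
    have h := G.rank_eq_finrank_span_row
    rw [hG] at h
    exact h
  -- choose an optimal Ω
  obtain ⟨Ω, hΩP, hΩeq⟩ := Finset.exists_mem_eq_sup
    ((Finset.univ : Finset (Fin k)).powerset.filter Finset.Nonempty)
    ⟨{⟨0, hk⟩}, by simp⟩ (fun Ω => (Ω.inf Z).card + Ω.card)
  have hΩne : Ω.Nonempty := (Finset.mem_filter.mp hΩP).2
  set J := Ω.inf Z with hJ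
  have hkt : ktilde Z = J.card + Ω.card := hΩeq
  have hs1 : 1 ≤ Ω.card := Finset.card_pos.mpr hΩne
  have hktn : J.card + Ω.card ≤ n := by rw [← hkt]; exact hktilde
  -- choose T ⊆ Jᶜ with |T| = |Ω| - 1
  have hcompl : Ω.card - 1 ≤ Jᶜ.card := by
    rw [Finset.card_compl, Fintype.card_fin]; omega
  obtain ⟨T, hTsub, hTcard⟩ := Finset.exists_subset_card_eq (s := Jᶜ) hcompl
  -- the evaluation map on T
  let f : (↥Ω → K) →ₗ[K] (↥T → K) :=
    { toFun := fun a t => ∑ i : ↥Ω, a i * G (i : Fin k) (t : Fin n)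
      map_add' := by
        intro a b; funext t
        simp [add_mul, Finset.sum_add_distrib]
      map_smul' := by
        intro r a; funext t
        simp [Finset.mul_sum, mul_assoc] }
  have hnotinj : ¬ Function.Injective f := by
    intro hinj
    have hle := LinearMap.finrank_le_finrank_of_injective hinj
    simp only [Module.finrank_pi, Fintype.card_coe, hTcard] at hle
    omega
  obtain ⟨a, haker, ha0⟩ : ∃ a : ↥Ω → K, f a = 0 ∧ a ≠ 0 := by
    have hker : LinearMap.ker f ≠ ⊥ := fun h => hnotinj (LinearMap.ker_eq_bot.mp h)
    obtain ⟨a, ha, ha0⟩ := Submodule.exists_mem_ne_zero_of_ne_bot hker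
    exact ⟨a, ha, ha0⟩
  -- the codeword
  set c : Fin n → K := fun j => ∑ i : ↥Ω, a i * G (i : Fin k) j with hcdef
  have hceq : c = ∑ i : ↥Ω, a i • G (i : Fin k) := by
    funext j
    simp [hcdef, Finset.sum_apply]
  have hcmem : c ∈ Submodule.span K (Set.range fun i : Fin k => G i) := by
    rw [hceq]
    exact Submodule.sum_mem _ fun i _ =>
      Submodule.smul_mem _ _ (Submodule.subset_span ⟨(i : Fin k), rfl⟩)
  have hcne : c ≠ 0 := by
    intro h0
    apply ha0
    have hLI : LinearIndependent K (fun i : ↥Ω => G (i : Fin k)) :=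
      hrows.comp _ Subtype.val_injective
    have hz := Fintype.linearIndependent_iff.mp hLI a (by rw [← hceq]; exact h0)
    funext i; exact hz i
  -- support of c avoids J and T
  have hJzero : ∀ j ∈ J, c j = 0 := by
    intro j hj
    simp only [hcdef]
    refine Finset.sum_eq_zero fun i _ => ?_
    have hsub : J ⊆ Z (i : Fin k) := Finset.inf_le i.2
    rw [hsupp (i : Fin k) j (hsub hj), mul_zero]
  have hTzero : ∀ j ∈ T, c j = 0 := by
    intro j hj
    have := congrFun haker ⟨j, hj⟩
    simpa [f, hcdef] using this
  -- the support bound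
  set S := Finset.univ.filter (fun j => c j ≠ 0) with hSdef
  have hScard : S.card ≤ n - ktilde Z + 1 := by
    have hSsub : S ⊆ (J ∪ T)ᶜ := by
      intro j hj
      simp only [hSdef, Finset.mem_filter] at hj
      simp only [Finset.mem_compl, Finset.mem_union]
      rintro (hjJ | hjT)
      · exact hj.2 (hJzero j hjJ)
      · exact hj.2 (hTzero j hjT)
    have hdisj : Disjoint J T := by
      rw [Finset.disjoint_left]
      intro x hxJ hxT
      exact (Finset.mem_compl.mp (hTsub hxT)) hxJ
    have h1 : S.card ≤ (J ∪ T)ᶜ.card := Finset.card_le_card hSsub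
    rw [Finset.card_compl, Finset.card_union_of_disjoint hdisj, Fintype.card_fin, hTcard] at h1
    omega
  refine ⟨c, hcmem, hcne, ?_⟩
  have hinj : Function.Injective e := e_injective nn e he
  calc sumRankWt Fq (fun j => c (e j))
      ≤ ∑ l : Fin ℓ, (Finset.univ.filter (fun t : Fin (nn l) => c (e ⟨l, t⟩) ≠ 0)).card :=
        Finset.sum_le_sum fun l _ => rankFq_le_card_support Fq _
    _ = (Finset.univ.filter (fun j : (l : Fin ℓ) × Fin (nn l) => c (e j) ≠ 0)).card := by
        rw [← Finset.card_sigma]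
        congr 1
        ext j
        simp [Finset.mem_sigma, Sigma.eta]
    _ ≤ S.card := by
        refine Finset.card_le_card_of_injOn e (fun j hj => ?_) hinj.injOn
        simp only [hSdef, Finset.mem_coe, Finset.mem_filter, Finset.mem_univ, true_and] at hj ⊢
        exact hj
    _ ≤ n - ktilde Z + 1 := hScard
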